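/- Let w ∈ W and let α ∈ wΠ (the image of a simple root under w). If there exists β ∈ R₀⁺ ∩ wR⁺ such that α ≤_w β, then there exists γ ∈ Π ∩ wR⁺ such that α ≤_w γ. -/

import Mathlib

open scoped BigOperators RealInnerProductSpace Classical

noncomputable section

variable {E : Type*} [NormedAddCommGroup E] [InnerProductSpace ℝ E] [FiniteDimensional ℝ E]

/-- The coroot `α∨ = 2α/|α|²`. -/
def coroot (α : E) : E := (2 / ⟪α, α⟫) • α

/-- The orthogonal reflection `r_α x = x - (α∨, x) α`. -/
def rRefl (α : E) (x : E) : E := x - ⟪coroot α, x⟫ • α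

/-- Data of an integral root system with positive subsystem and
a Weyl-invariant positive multiplicity function. -/
structure HOData (E : Type*) [NormedAddCommGroup E] [InnerProductSpace ℝ E] : Type _ where
  R : Finset E
  Rpos : Finset E
  k : E → ℝ
  k_pos : ∀ α ∈ R, 0 < k α
  root_ne_zero : ∀ α ∈ R, α ≠ 0
  pos_subset : Rpos ⊆ R
  pos_char : ∃ u : E, ∀ α ∈ R, (α ∈ Rpos ↔ 0 < ⟪α, u⟫)
  pos_or_neg : ∀ α ∈ R, α ∈ Rpos ∨ -α ∈ Rpos
  neg_mem : ∀ α ∈ R, -α ∈ R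
  integral : ∀ α ∈ R, ∀ β ∈ R, ∃ n : ℤ, ⟪coroot α, β⟫ = (n : ℝ)
  refl_mem : ∀ α ∈ R, ∀ β ∈ R, rRefl α β ∈ R
  k_inv : ∀ α ∈ R, ∀ β ∈ R, k (rRefl α β) = k β

/-- The Weyl group: the subgroup of linear isometries generated by the root reflections. -/
def weylGroup (D : HOData E) : Subgroup (E ≃ₗᵢ[ℝ] E) :=
  Subgroup.closure {w : E ≃ₗᵢ[ℝ] E | ∃ α ∈ D.R, ∀ x, w x = rRefl α x}

/-- `ρ = (1/2) Σ_{α ∈ R⁺} k_α α`. -/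
def rhoHO (D : HOData E) : E := (2:ℝ)⁻¹ • ∑ α ∈ D.Rpos, D.k α • α

/-- Regular points. -/
def HORegular (D : HOData E) (x : E) : Prop := ∀ α ∈ D.R, ⟪α, x⟫ ≠ 0

/-- The (open) positive Weyl chamber. -/
def posChamber (D : HOData E) : Set E := {x | ∀ α ∈ D.Rpos, 0 < ⟪α, x⟫}

/-- The positive indivisible roots `R₀⁺`. -/
def Rpos0 (D : HOData E) : Finset E := D.Rpos.filter (fun α => (2:ℝ)⁻¹ • α ∉ D.R)

/-- The Opdam function `G_λ` for a real parameter `λ`: an analytic function,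
normalized at `0`, satisfying the Cherednik differential-difference system. -/
def IsOpdamR (D : HOData E) (lam : E) (G : E → ℝ) : Prop :=
  AnalyticOnNhd ℝ G Set.univ ∧ G 0 = 1 ∧
  ∀ ξ x, HORegular D x →
    fderiv ℝ G x ξ =
      (∑ α ∈ D.Rpos, D.k α * ⟪α, ξ⟫ / (1 - Real.exp (-⟪α, x⟫)) * (G (rRefl α x) - G x))
      + ⟪rhoHO D + lam, ξ⟫ * G x

/-- The Opdam function `G_λ` for a complex parameter `λ = l1 + i l2 ∈ h`. -/
def IsOpdamC (D : HOData E) (l1 l2 : E) (G : E → ℂ) : Prop :=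
  AnalyticOnNhd ℝ G Set.univ ∧ G 0 = 1 ∧
  ∀ ξ x, HORegular D x →
    fderiv ℝ G x ξ =
      (∑ α ∈ D.Rpos, ((D.k α * ⟪α, ξ⟫ / (1 - Real.exp (-⟪α, x⟫)) : ℝ) : ℂ)
          * (G (rRefl α x) - G x))
      + (((⟪rhoHO D + l1, ξ⟫ : ℝ) : ℂ) + Complex.I * ((⟪l2, ξ⟫ : ℝ) : ℂ)) * G x

/-- The symmetrization `F(x) = |W|⁻¹ Σ_{w ∈ W} G(w x)` (real valued case). -/
def Fsym (D : HOData E) [Fintype (weylGroup D)] (G : E → ℝ) (x : E) : ℝ :=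
  (Fintype.card (weylGroup D) : ℝ)⁻¹ * ∑ w : weylGroup D, G (w.1 x)

/-- The symmetrization `F(x) = |W|⁻¹ Σ_{w ∈ W} G(w x)` (complex valued case). -/
def FsymC (D : HOData E) [Fintype (weylGroup D)] (G : E → ℂ) (x : E) : ℂ :=
  (Fintype.card (weylGroup D) : ℂ)⁻¹ * ∑ w : weylGroup D, G (w.1 x)

/-- `max_{w ∈ W} (w λ, x)`. -/
def maxW (D : HOData E) [Fintype (weylGroup D)] (lam x : E) : ℝ :=
  ⨆ w : weylGroup D, ⟪w.1 lam, x⟫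

/-- `Π` is the set of simple roots: indecomposable positive roots. -/
def IsSimpleSet (D : HOData E) (Pi : Finset E) : Prop :=
  ∀ α, α ∈ Pi ↔ α ∈ D.Rpos ∧ ∀ β ∈ D.Rpos, ∀ γ ∈ D.Rpos, α ≠ β + γ

/-- The positive lattice `Q⁺`: the ℕ-span of the positive roots. -/
def Qpos (D : HOData E) : Set E := {q | ∃ c : E → ℕ, q = ∑ α ∈ D.Rpos, (c α : ℝ) • α}

/-- `q' ≤_w q` iff `q' ∈ wQ⁺` and `q - q' ∈ wQ⁺`. -/
def leW (D : HOData E) (w : weylGroup D) (q' q : E) : Prop :=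
  w.1.symm q' ∈ Qpos D ∧ w.1.symm (q - q') ∈ Qpos D

set_option linter.unusedSectionVars false
set_option maxHeartbeats 1000000

section Aux14

lemma inner_coroot_self {α : E} (h : α ≠ 0) : ⟪coroot α, α⟫ = 2 := by
  have h0 : ⟪α, α⟫ ≠ (0:ℝ) := fun hc => h (inner_self_eq_zero.mp hc)
  simp [coroot, real_inner_smul_left]
  field_simp

lemma inner_coroot (α β : E) : ⟪coroot α, β⟫ = 2 / ⟪α, α⟫ * ⟪α, β⟫ := by
  simp [coroot, real_inner_smul_left]

lemma rRefl_rRefl {α : E} (h : α ≠ 0) (x : E) : rRefl α (rRefl α x) = x := by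
  have h2 := inner_coroot_self h
  simp only [rRefl, inner_sub_right, real_inner_smul_right, h2]
  module

/-- Every element of the Weyl group maps `R` into `R` (both directions). -/
lemma weyl_acts (D : HOData E) (g : E ≃ₗᵢ[ℝ] E) (hg : g ∈ weylGroup D) :
    (∀ x ∈ D.R, g x ∈ D.R) ∧ (∀ x ∈ D.R, g.symm x ∈ D.R) := by
  induction hg using Subgroup.closure_induction with
  | mem g hg =>
    obtain ⟨α, hαR, hgα⟩ := hg
    have hinv : ∀ x, g (g x) = x := by
      intro x; rw [hgα, hgα]; exact rRefl_rRefl (D.root_ne_zero α hαR) x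
    have hsymm : ∀ x, g.symm x = g x := by
      intro x
      have := hinv x
      calc g.symm x = g.symm (g (g x)) := by rw [hinv]
        _ = g x := g.symm_apply_apply _
    constructor
    · intro x hx; rw [hgα]; exact D.refl_mem α hαR x hx
    · intro x hx; rw [hsymm, hgα]; exact D.refl_mem α hαR x hx
  | one => constructor <;> intro x hx <;> exact hx
  | mul a b ha hb iha ihb =>
    constructor
    · intro x hx
      have : (a * b) x = a (b x) := rfl
      rw [this]; exact iha.1 _ (ihb.1 x hx)
    · intro x hx
      have : (a * b).symm x = b.symm (a.symm x) := rfl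
      rw [this]; exact ihb.2 _ (iha.2 x hx)
  | inv a ha iha =>
    constructor
    · intro x hx; exact iha.2 x hx
    · intro x hx; exact iha.1 x hx

end Aux14
section Aux14b
set_option linter.unusedSectionVars false
set_option maxHeartbeats 1000000

lemma sub_mem_of_inner_pos (D : HOData E) {α β : E} (hα : α ∈ D.R) (hβ : β ∈ D.R)
    (hne : α ≠ β) (hip : 0 < ⟪α, β⟫) : α - β ∈ D.R := by
  obtain ⟨m, hm⟩ := D.integral α hα β hβ
  obtain ⟨n, hn⟩ := D.integral β hβ α hα
  have hα0 := D.root_ne_zero α hα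
  have hβ0 := D.root_ne_zero β hβ
  have haa : (0:ℝ) < ⟪α, α⟫ := lt_of_le_of_ne real_inner_self_nonneg (Ne.symm (inner_self_ne_zero.mpr hα0))
  have hbb : (0:ℝ) < ⟪β, β⟫ := lt_of_le_of_ne real_inner_self_nonneg (Ne.symm (inner_self_ne_zero.mpr hβ0))
  have hm2 : (m : ℝ) * ⟪α, α⟫ = 2 * ⟪α, β⟫ := by
    rw [← hm, inner_coroot]; field_simp
  have hn2 : (n : ℝ) * ⟪β, β⟫ = 2 * ⟪α, β⟫ := by
    rw [← hn, inner_coroot, real_inner_comm β α]; field_simp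
  have hmpos : (1:ℤ) ≤ m := by
    have h0 : (0:ℝ) < (m:ℝ) := by nlinarith
    have : (0:ℤ) < m := by exact_mod_cast h0
    omega
  have hnpos : (1:ℤ) ≤ n := by
    have h0 : (0:ℝ) < (n:ℝ) := by nlinarith
    have : (0:ℤ) < n := by exact_mod_cast h0
    omega
  by_cases hm1 : m = 1
  · -- rRefl α β = β - α ∈ R
    have : rRefl α β = β - α := by rw [rRefl, hm, hm1]; simp
    have h1 : β - α ∈ D.R := this ▸ D.refl_mem α hα β hβ
    have := D.neg_mem _ h1
    simpa using this
  by_cases hn1 : n = 1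
  · have : rRefl β α = α - β := by rw [rRefl, hn, hn1]; simp
    exact this ▸ D.refl_mem β hβ α hα
  -- now m, n ≥ 2 : derive contradiction
  exfalso
  have hm2' : (2:ℝ) ≤ (m:ℝ) := by exact_mod_cast (by omega : (2:ℤ) ≤ m)
  have hn2' : (2:ℝ) ≤ (n:ℝ) := by exact_mod_cast (by omega : (2:ℤ) ≤ n)
  have hcs : ⟪α, β⟫ * ⟪α, β⟫ ≤ ⟪α, α⟫ * ⟪β, β⟫ := real_inner_mul_inner_self_le α β
  have hmn : (4:ℝ) ≤ (m:ℝ) * (n:ℝ) := by nlinarith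
  have key4 : ((m:ℝ) * ⟪α, α⟫) * ((n:ℝ) * ⟪β, β⟫) = 4 * (⟪α, β⟫ * ⟪α, β⟫) := by
    rw [hm2, hn2]; ring
  have hge : ⟪α, α⟫ * ⟪β, β⟫ ≤ ⟪α, β⟫ * ⟪α, β⟫ := by nlinarith [mul_pos haa hbb]
  have heq : ⟪α, β⟫ * ⟪α, β⟫ = ⟪α, α⟫ * ⟪β, β⟫ := le_antisymm hcs hge
  set t : ℝ := ⟪α, β⟫ / ⟪α, α⟫ with ht
  have htpos : 0 < t := div_pos hip haa
  have hz : β - t • α = 0 := by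
    have hcomm : ⟪β, α⟫ = ⟪α, β⟫ := real_inner_comm α β
    have hnorm : ⟪β - t • α, β - t • α⟫ = 0 := by
      simp only [inner_sub_left, inner_sub_right, real_inner_smul_left, real_inner_smul_right]
      rw [hcomm, ht]
      field_simp
      nlinarith [heq]
    exact inner_self_eq_zero.mp hnorm
  have hβt : β = t • α := by rwa [sub_eq_zero] at hz
  have hipt : ⟪α, β⟫ = t * ⟪α, α⟫ := by rw [hβt, real_inner_smul_right]
  have ht1 : (1:ℝ) ≤ t := by nlinarith
  have ht2 : t ≤ 1 := by
    have hbbt : ⟪β, β⟫ = t * t * ⟪α, α⟫ := by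
      rw [hβt, real_inner_smul_left, real_inner_smul_right]; ring
    nlinarith
  have : t = 1 := le_antisymm ht2 ht1
  rw [this, one_smul] at hβt
  exact hne hβt.symm

lemma simple_nonpos (D : HOData E) (Pi : Finset E) (hPi : IsSimpleSet D Pi)
    {a b : E} (ha : a ∈ Pi) (hb : b ∈ Pi) (hne : a ≠ b) : ⟪a, b⟫ ≤ 0 := by
  by_contra h
  push_neg at h
  have haP := (hPi a).mp ha
  have hbP := (hPi b).mp hb
  have haR : a ∈ D.R := D.pos_subset haP.1
  have hbR : b ∈ D.R := D.pos_subset hbP.1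
  have hsub : a - b ∈ D.R := sub_mem_of_inner_pos D haR hbR hne h
  rcases D.pos_or_neg _ hsub with hpos | hneg
  · exact haP.2 b hbP.1 (a - b) hpos (by abel)
  · have : b - a ∈ D.Rpos := by simpa using hneg
    exact hbP.2 a haP.1 (b - a) this (by abel)

end Aux14b
section Aux14c
set_option linter.unusedSectionVars false
set_option maxHeartbeats 1000000

/-- The ℕ-span of a finite set. -/
def NPi (Pi : Finset E) : Set E := {x | ∃ c : E → ℕ, x = ∑ π ∈ Pi, (c π : ℝ) • π}

lemma NPi_add {Pi : Finset E} {x y : E} (hx : x ∈ NPi Pi) (hy : y ∈ NPi Pi) :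
    x + y ∈ NPi Pi := by
  obtain ⟨c, rfl⟩ := hx
  obtain ⟨d, rfl⟩ := hy
  refine ⟨fun π => c π + d π, ?_⟩
  rw [← Finset.sum_add_distrib]
  apply Finset.sum_congr rfl
  intro π _
  push_cast
  rw [add_smul]

lemma NPi_zero (Pi : Finset E) : (0:E) ∈ NPi Pi :=
  ⟨fun _ => 0, by simp⟩

lemma mem_NPi_of_mem {Pi : Finset E} {a : E} (ha : a ∈ Pi) : a ∈ NPi Pi := by
  refine ⟨fun π => if π = a then 1 else 0, ?_⟩
  simp only [Nat.cast_ite, Nat.cast_one, Nat.cast_zero, ite_smul, one_smul, zero_smul]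
  rw [Finset.sum_ite_eq' Pi a (fun π => π)]
  simp [ha]

lemma NPi_nsmul {Pi : Finset E} {x : E} (n : ℕ) (hx : x ∈ NPi Pi) : (n:ℝ) • x ∈ NPi Pi := by
  obtain ⟨c, rfl⟩ := hx
  refine ⟨fun π => n * c π, ?_⟩
  rw [Finset.smul_sum]
  apply Finset.sum_congr rfl
  intro π _
  push_cast
  rw [smul_smul]

lemma Qpos_add {D : HOData E} {x y : E} (hx : x ∈ Qpos D) (hy : y ∈ Qpos D) :
    x + y ∈ Qpos D := by
  obtain ⟨c, rfl⟩ := hx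
  obtain ⟨d, rfl⟩ := hy
  refine ⟨fun π => c π + d π, ?_⟩
  rw [← Finset.sum_add_distrib]
  apply Finset.sum_congr rfl
  intro π _
  push_cast
  rw [add_smul]

lemma mem_Qpos_of_mem {D : HOData E} {a : E} (ha : a ∈ D.Rpos) : a ∈ Qpos D := by
  refine ⟨fun π => if π = a then 1 else 0, ?_⟩
  simp only [Nat.cast_ite, Nat.cast_one, Nat.cast_zero, ite_smul, one_smul, zero_smul]
  rw [Finset.sum_ite_eq' D.Rpos a (fun π => π)]
  simp [ha]

lemma NPi_subset_Qpos {D : HOData E} {Pi : Finset E} (hsub : Pi ⊆ D.Rpos) {x : E}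
    (hx : x ∈ NPi Pi) : x ∈ Qpos D := by
  obtain ⟨c, rfl⟩ := hx
  refine ⟨fun δ => if δ ∈ Pi then c δ else 0, ?_⟩
  rw [← Finset.sum_subset hsub (fun δ _ hδ => by simp [hδ])]
  apply Finset.sum_congr rfl
  intro π hπ
  simp [hπ]

/-- Every positive root is an ℕ-combination of simple roots. -/
lemma posRoot_NPi (D : HOData E) (Pi : Finset E) (hPi : IsSimpleSet D Pi)
    (u : E) (hu : ∀ α ∈ D.R, (α ∈ D.Rpos ↔ 0 < ⟪α, u⟫)) :
    ∀ β ∈ D.Rpos, β ∈ NPi Pi := by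
  have hpos : ∀ β ∈ D.Rpos, 0 < ⟪β, u⟫ := fun β hβ => (hu β (D.pos_subset hβ)).mp hβ
  have hcard : ∀ β₁ β₂ β : E, β₁ ∈ D.Rpos → β₂ ∈ D.Rpos → β = β₁ + β₂ →
      (D.Rpos.filter (fun δ => ⟪δ, u⟫ < ⟪β₁, u⟫)).card <
        (D.Rpos.filter (fun δ => ⟪δ, u⟫ < ⟪β, u⟫)).card := by
    intro β₁ β₂ β h1 h2 heq
    have hlt : ⟪β₁, u⟫ < ⟪β, u⟫ := by
      rw [heq, inner_add_left]
      have := hpos β₂ h2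
      linarith
    apply Finset.card_lt_card
    constructor
    · intro δ hδ
      rw [Finset.mem_filter] at hδ ⊢
      exact ⟨hδ.1, lt_trans hδ.2 hlt⟩
    · intro hsub
      have h₁ : β₁ ∈ D.Rpos.filter (fun δ => ⟪δ, u⟫ < ⟪β, u⟫) :=
        Finset.mem_filter.mpr ⟨h1, hlt⟩
      have h₂ := hsub h₁
      rw [Finset.mem_filter] at h₂
      exact lt_irrefl _ h₂.2
  have key : ∀ n : ℕ, ∀ β ∈ D.Rpos,
      (D.Rpos.filter (fun δ => ⟪δ, u⟫ < ⟪β, u⟫)).card ≤ n → β ∈ NPi Pi := by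
    intro n
    induction n with
    | zero =>
      intro β hβ hc
      by_cases hβPi : β ∈ Pi
      · exact mem_NPi_of_mem hβPi
      · exfalso
        have := (hPi β).not.mp hβPi
        push_neg at this
        obtain ⟨β₁, h1, β₂, h2, heq⟩ := this hβ
        have := hcard β₁ β₂ β h1 h2 heq
        omega
    | succ n ih =>
      intro β hβ hc
      by_cases hβPi : β ∈ Pi
      · exact mem_NPi_of_mem hβPi
      · have := (hPi β).not.mp hβPi
        push_neg at this
        obtain ⟨β₁, h1, β₂, h2, heq⟩ := this hβ
        have hc1 := hcard β₁ β₂ β h1 h2 heq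
        have hc2 := hcard β₂ β₁ β h2 h1 (by rw [heq]; abel)
        rw [heq]
        exact NPi_add (ih β₁ h1 (by omega)) (ih β₂ h2 (by omega))
  intro β hβ
  exact key _ β hβ le_rfl

lemma Qpos_subset_NPi (D : HOData E) (Pi : Finset E) (hPi : IsSimpleSet D Pi)
    (u : E) (hu : ∀ α ∈ D.R, (α ∈ D.Rpos ↔ 0 < ⟪α, u⟫)) {x : E}
    (hx : x ∈ Qpos D) : x ∈ NPi Pi := by
  obtain ⟨c, rfl⟩ := hx
  apply Finset.sum_induction _ (· ∈ NPi Pi) (fun _ _ => NPi_add) (NPi_zero Pi)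
  intro δ hδ
  exact NPi_nsmul (c δ) (posRoot_NPi D Pi hPi u hu δ hδ)

end Aux14c
section Aux14d
set_option linter.unusedSectionVars false
set_option maxHeartbeats 1000000

/-- Linear independence of the simple roots (integer-coefficient form). -/
lemma pi_indep (D : HOData E) (Pi : Finset E) (hPi : IsSimpleSet D Pi)
    (u : E) (hu : ∀ α ∈ D.R, (α ∈ D.Rpos ↔ 0 < ⟪α, u⟫))
    (t : E → ℤ) (ht : (∑ π ∈ Pi, (t π : ℝ) • π) = 0) : ∀ π ∈ Pi, t π = 0 := by
  classical
  have hPiRpos : ∀ π ∈ Pi, π ∈ D.Rpos := fun π hπ => ((hPi π).mp hπ).1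
  have hposu : ∀ π ∈ Pi, 0 < ⟪π, u⟫ := fun π hπ =>
    (hu π (D.pos_subset (hPiRpos π hπ))).mp (hPiRpos π hπ)
  set P := Pi.filter (fun π => 0 < t π) with hP
  set N := Pi.filter (fun π => t π < 0) with hN
  have hPsub : P ⊆ Pi := Finset.filter_subset _ _
  have hNsub : N ⊆ Pi := Finset.filter_subset _ _
  have hdisj : Disjoint P N := by
    rw [Finset.disjoint_left]
    intro π hπP hπN
    rw [hP, Finset.mem_filter] at hπP
    rw [hN, Finset.mem_filter] at hπN
    omega
  set v := ∑ π ∈ P, (t π : ℝ) • π with hv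
  set w := ∑ π ∈ N, ((-(t π) : ℤ) : ℝ) • π with hw
  have hvw : v = w := by
    have h1 : v - w = ∑ π ∈ P ∪ N, (t π : ℝ) • π := by
      rw [hv, hw, Finset.sum_union hdisj, sub_eq_add_neg, ← Finset.sum_neg_distrib]
      congr 1
      apply Finset.sum_congr rfl
      intro π _
      push_cast
      rw [neg_smul, neg_neg]
    have h2 : (∑ π ∈ P ∪ N, (t π : ℝ) • π) = ∑ π ∈ Pi, (t π : ℝ) • π := by
      apply Finset.sum_subset (Finset.union_subset hPsub hNsub)
      intro π hπ hπn
      rw [Finset.mem_union, hP, hN, Finset.mem_filter, Finset.mem_filter] at hπn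
      push_neg at hπn
      have : t π = 0 := by
        rcases hπn with ⟨h1', h2'⟩
        have := h1' hπ
        have := h2' hπ
        omega
      simp [this]
    have : v - w = 0 := by rw [h1, h2, ht]
    exact sub_eq_zero.mp this
  have hvv : ⟪v, v⟫ ≤ 0 := by
    nth_rewrite 2 [hvw]
    rw [hv, hw, sum_inner]
    apply Finset.sum_nonpos
    intro π hπP
    rw [real_inner_smul_left, inner_sum]
    rw [hP, Finset.mem_filter] at hπP
    have htπ : (0:ℝ) ≤ (t π : ℝ) := by exact_mod_cast le_of_lt hπP.2
    apply mul_nonpos_of_nonneg_of_nonpos htπ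
    apply Finset.sum_nonpos
    intro π' hπ'N
    rw [real_inner_smul_right]
    rw [hN, Finset.mem_filter] at hπ'N
    have htπ' : (0:ℝ) ≤ ((-(t π') : ℤ) : ℝ) := by
      have hr : ((t π' : ℤ) : ℝ) < 0 := by exact_mod_cast hπ'N.2
      push_cast
      linarith
    apply mul_nonpos_of_nonneg_of_nonpos htπ'
    -- ⟪π, π'⟫ ≤ 0 : distinct simple roots
    have hne : π ≠ π' := by
      intro hEq
      rw [hEq] at hπP
      omega
    exact simple_nonpos D Pi hPi hπP.1 hπ'N.1 hne
  have hv0 : v = 0 := by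
    have h0 : ⟪v, v⟫ = 0 := le_antisymm hvv real_inner_self_nonneg
    exact inner_self_eq_zero.mp h0
  have hw0 : w = 0 := by rw [← hvw]; exact hv0
  intro π hπ
  by_contra hne
  rcases lt_or_gt_of_ne hne with hlt | hgt
  · -- π ∈ N, use w
    have hπN : π ∈ N := by rw [hN, Finset.mem_filter]; exact ⟨hπ, hlt⟩
    have : (0:ℝ) < ⟪w, u⟫ := by
      rw [hw, sum_inner]
      apply Finset.sum_pos'
      · intro π' hπ'
        rw [real_inner_smul_left]
        rw [hN, Finset.mem_filter] at hπ'
        have hr : ((t π' : ℤ) : ℝ) < 0 := by exact_mod_cast hπ'.2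
        have h1 : (0:ℝ) ≤ ((-(t π') : ℤ) : ℝ) := by push_cast; linarith
        exact mul_nonneg h1 (le_of_lt (hposu π' hπ'.1))
      · refine ⟨π, hπN, ?_⟩
        rw [real_inner_smul_left]
        have hr : ((t π : ℤ) : ℝ) < 0 := by exact_mod_cast hlt
        have h1 : (0:ℝ) < ((-(t π) : ℤ) : ℝ) := by push_cast; linarith
        exact mul_pos h1 (hposu π hπ)
    rw [hw0] at this
    simp at this
  · have hπP : π ∈ P := by rw [hP, Finset.mem_filter]; exact ⟨hπ, hgt⟩
    have : (0:ℝ) < ⟪v, u⟫ := by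
      rw [hv, sum_inner]
      apply Finset.sum_pos'
      · intro π' hπ'
        rw [real_inner_smul_left]
        rw [hP, Finset.mem_filter] at hπ'
        have h1 : (0:ℝ) ≤ ((t π') : ℝ) := by exact_mod_cast le_of_lt hπ'.2
        exact mul_nonneg h1 (le_of_lt (hposu π' hπ'.1))
      · refine ⟨π, hπP, ?_⟩
        rw [real_inner_smul_left]
        have h1 : (0:ℝ) < ((t π) : ℝ) := by exact_mod_cast hgt
        exact mul_pos h1 (hposu π hπ)
    rw [hv0] at this
    simp at this

end Aux14d
section Aux14e
set_option linter.unusedSectionVars false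
set_option maxHeartbeats 1000000

lemma sum_indicator_eq {Pi : Finset E} {a : E} (ha : a ∈ Pi) :
    (∑ π ∈ Pi, (if π = a then (1:ℝ) else 0) • π) = a := by
  simp only [ite_smul, one_smul, zero_smul]
  rw [Finset.sum_ite_eq' Pi a (fun π => π)]
  simp [ha]

lemma split_lemma (D : HOData E) (Pi : Finset E) (hPi : IsSimpleSet D Pi)
    (u : E) (hu : ∀ α ∈ D.R, (α ∈ D.Rpos ↔ 0 < ⟪α, u⟫))
    {a b₁ b₂ : E} (ha : a ∈ Pi)
    (h1 : b₁ ∈ NPi Pi) (h2 : b₂ ∈ NPi Pi) (h3 : b₁ + b₂ - a ∈ NPi Pi) :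
    b₁ - a ∈ NPi Pi ∨ b₂ - a ∈ NPi Pi := by
  classical
  obtain ⟨m, hm⟩ := h1
  obtain ⟨n, hn⟩ := h2
  obtain ⟨p, hp⟩ := h3
  have sub_case : ∀ (c : E → ℕ) (x : E), x = (∑ π ∈ Pi, (c π : ℝ) • π) → 1 ≤ c a →
      x - a ∈ NPi Pi := by
    intro c x hx hca
    refine ⟨fun π => c π - (if π = a then 1 else 0), ?_⟩
    have hle : ∀ π, (if π = a then 1 else 0) ≤ c π := by
      intro π
      split
      · next h => rw [h]; exact hca
      · exact Nat.zero_le _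
    have : (∑ π ∈ Pi, ((c π - if π = a then 1 else 0 : ℕ) : ℝ) • π)
        = ∑ π ∈ Pi, ((c π : ℝ) • π - (if π = a then (1:ℝ) else 0) • π) := by
      apply Finset.sum_congr rfl
      intro π _
      have hite : (((if π = a then (1:ℕ) else 0) : ℕ) : ℝ) = (if π = a then (1:ℝ) else 0) := by
        split <;> simp
      rw [Nat.cast_sub (hle π), sub_smul, hite]
    rw [this, Finset.sum_sub_distrib, sum_indicator_eq ha, ← hx]
  by_cases hma : 1 ≤ m a
  · exact Or.inl (sub_case m b₁ hm hma)
  by_cases hna : 1 ≤ n a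
  · exact Or.inr (sub_case n b₂ hn hna)
  exfalso
  set t : E → ℤ := fun π => (m π : ℤ) + (n π : ℤ) - (p π : ℤ) - (if π = a then 1 else 0)
    with htdef
  have hsum : (∑ π ∈ Pi, (t π : ℝ) • π) = 0 := by
    have : ∀ π ∈ Pi, (t π : ℝ) • π
        = (m π : ℝ) • π + (n π : ℝ) • π - (p π : ℝ) • π - (if π = a then (1:ℝ) else 0) • π := by
      intro π _
      have hite : (((if π = a then (1:ℤ) else 0) : ℤ) : ℝ) = (if π = a then (1:ℝ) else 0) := by
        split <;> simp
      rw [htdef]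
      push_cast [hite]
      rw [sub_smul, sub_smul, add_smul]
    rw [Finset.sum_congr rfl this]
    rw [Finset.sum_sub_distrib, Finset.sum_sub_distrib, Finset.sum_add_distrib,
      sum_indicator_eq ha, ← hm, ← hn, ← hp]
    abel
  have hta := pi_indep D Pi hPi u hu t hsum a ha
  have hta' : (m a : ℤ) + (n a : ℤ) - (p a : ℤ) - 1 = 0 := by
    have : t a = (m a : ℤ) + (n a : ℤ) - (p a : ℤ) - 1 := by
      rw [htdef]; simp
    rw [← this, hta]
  omega

end Aux14e
set_option maxHeartbeats 1000000 in
/-- let `α ∈ wΠ`.  If some `β ∈ R₀⁺ ∩ wR⁺` satisfies `α ≤_w β`,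
then some `γ ∈ Π ∩ wR⁺` satisfies `α ≤_w γ`. -/
theorem statement14 (D : HOData E) (Pi : Finset E) (hPi : IsSimpleSet D Pi)
    (w : weylGroup D) (α : E) (hα : w.1.symm α ∈ Pi)
    (hβ : ∃ β, β ∈ Rpos0 D ∧ w.1.symm β ∈ D.Rpos ∧ leW D w α β) :
    ∃ γ, γ ∈ Pi ∧ w.1.symm γ ∈ D.Rpos ∧ leW D w α γ := by
  classical
  obtain ⟨u, hu⟩ := D.pos_char
  obtain ⟨β₀, hβ₀, hwβ₀, hleα, hleβ⟩ := hβ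
  have hwR : ∀ x ∈ D.R, w.1.symm x ∈ D.R := (weyl_acts D w.1 w.2).2
  have hβ₀pos : β₀ ∈ D.Rpos := (Finset.mem_filter.mp hβ₀).1
  have hPiRpos : ∀ π ∈ Pi, π ∈ D.Rpos := fun π hπ => ((hPi π).mp hπ).1
  have hpos : ∀ β ∈ D.Rpos, 0 < ⟪β, u⟫ := fun β hb => (hu β (D.pos_subset hb)).mp hb
  -- one decomposition step
  have step : ∀ β ∈ D.Rpos, β ∉ Pi → w.1.symm β ∈ D.Rpos → w.1.symm (β - α) ∈ Qpos D →
      ∃ β', β' ∈ D.Rpos ∧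
        (D.Rpos.filter (fun δ => ⟪δ, u⟫ < ⟪β', u⟫)).card <
          (D.Rpos.filter (fun δ => ⟪δ, u⟫ < ⟪β, u⟫)).card ∧
        w.1.symm β' ∈ D.Rpos ∧ w.1.symm (β' - α) ∈ Qpos D := by
    intro β hβR hβPi hwβ hq
    have hdec := (hPi β).not.mp hβPi
    push_neg at hdec
    obtain ⟨β₁, h1, β₂, h2, heq⟩ := hdec hβR
    have hcard : ∀ γ₁ γ₂ : E, γ₁ ∈ D.Rpos → γ₂ ∈ D.Rpos → β = γ₁ + γ₂ →
        (D.Rpos.filter (fun δ => ⟪δ, u⟫ < ⟪γ₁, u⟫)).card <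
          (D.Rpos.filter (fun δ => ⟪δ, u⟫ < ⟪β, u⟫)).card := by
      intro γ₁ γ₂ hγ₁ hγ₂ heq'
      have hlt : ⟪γ₁, u⟫ < ⟪β, u⟫ := by
        rw [heq', inner_add_left]
        have := hpos γ₂ hγ₂
        linarith
      apply Finset.card_lt_card
      constructor
      · intro δ hδ
        rw [Finset.mem_filter] at hδ ⊢
        exact ⟨hδ.1, lt_trans hδ.2 hlt⟩
      · intro hsub
        have hg : γ₁ ∈ D.Rpos.filter (fun δ => ⟪δ, u⟫ < ⟪β, u⟫) :=
          Finset.mem_filter.mpr ⟨hγ₁, hlt⟩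
        have := Finset.mem_filter.mp (hsub hg)
        exact lt_irrefl _ this.2
    by_cases hb1 : w.1.symm β₁ ∈ D.Rpos
    · by_cases hb2 : w.1.symm β₂ ∈ D.Rpos
      · -- both images positive: use the splitting lemma
        have hb1N : w.1.symm β₁ ∈ NPi Pi := posRoot_NPi D Pi hPi u hu _ hb1
        have hb2N : w.1.symm β₂ ∈ NPi Pi := posRoot_NPi D Pi hPi u hu _ hb2
        have hsum : w.1.symm β₁ + w.1.symm β₂ - w.1.symm α ∈ NPi Pi := by
          have e : w.1.symm (β - α) = w.1.symm β₁ + w.1.symm β₂ - w.1.symm α := by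
            rw [heq]; simp
          rw [← e]
          exact Qpos_subset_NPi D Pi hPi u hu hq
        have esub : ∀ γ : E, w.1.symm (γ - α) = w.1.symm γ - w.1.symm α := by
          intro γ; simp
        rcases split_lemma D Pi hPi u hu hα hb1N hb2N hsum with h | h
        · refine ⟨β₁, h1, hcard β₁ β₂ h1 h2 heq, hb1, ?_⟩
          rw [esub]
          exact NPi_subset_Qpos (fun π hπ => hPiRpos π hπ) h
        · refine ⟨β₂, h2, hcard β₂ β₁ h2 h1 (by rw [heq]; abel), hb2, ?_⟩
          rw [esub]
          exact NPi_subset_Qpos (fun π hπ => hPiRpos π hπ) h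
      · -- image of β₂ is a negative root
        have hb2R : w.1.symm β₂ ∈ D.R := hwR β₂ (D.pos_subset h2)
        have hnb2 : -(w.1.symm β₂) ∈ D.Rpos := (D.pos_or_neg _ hb2R).resolve_left hb2
        refine ⟨β₁, h1, hcard β₁ β₂ h1 h2 heq, ?_, ?_⟩
        · have hb1R : w.1.symm β₁ ∈ D.R := hwR β₁ (D.pos_subset h1)
          rw [hu _ hb1R]
          have e : w.1.symm β₁ = w.1.symm β + -(w.1.symm β₂) := by
            rw [heq]; simp
          rw [e, inner_add_left]
          have := hpos _ hwβ
          have := hpos _ hnb2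
          linarith
        · have e : w.1.symm (β₁ - α) = w.1.symm (β - α) + -(w.1.symm β₂) := by
            rw [heq]; simp; abel
          rw [e]
          exact Qpos_add hq (mem_Qpos_of_mem hnb2)
    · -- image of β₁ is a negative root: symmetric, use β₂
      have hb1R : w.1.symm β₁ ∈ D.R := hwR β₁ (D.pos_subset h1)
      have hnb1 : -(w.1.symm β₁) ∈ D.Rpos := (D.pos_or_neg _ hb1R).resolve_left hb1
      refine ⟨β₂, h2, hcard β₂ β₁ h2 h1 (by rw [heq]; abel), ?_, ?_⟩
      · have hb2R : w.1.symm β₂ ∈ D.R := hwR β₂ (D.pos_subset h2)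
        rw [hu _ hb2R]
        have e : w.1.symm β₂ = w.1.symm β + -(w.1.symm β₁) := by
          rw [heq]; simp
        rw [e, inner_add_left]
        have := hpos _ hwβ
        have := hpos _ hnb1
        linarith
      · have e : w.1.symm (β₂ - α) = w.1.symm (β - α) + -(w.1.symm β₁) := by
          rw [heq]; simp; abel
        rw [e]
        exact Qpos_add hq (mem_Qpos_of_mem hnb1)
  -- main induction on the cardinality measure
  have key : ∀ n : ℕ, ∀ β ∈ D.Rpos,
      (D.Rpos.filter (fun δ => ⟪δ, u⟫ < ⟪β, u⟫)).card ≤ n →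
      w.1.symm β ∈ D.Rpos → w.1.symm (β - α) ∈ Qpos D →
      ∃ γ, γ ∈ Pi ∧ w.1.symm γ ∈ D.Rpos ∧ leW D w α γ := by
    intro n
    induction n with
    | zero =>
      intro β hβR hc hwβ hq
      by_cases hβPi : β ∈ Pi
      · exact ⟨β, hβPi, hwβ, hleα, hq⟩
      · obtain ⟨β', _, hlt, _, _⟩ := step β hβR hβPi hwβ hq
        omega
    | succ n ih =>
      intro β hβR hc hwβ hq
      by_cases hβPi : β ∈ Pi
      · exact ⟨β, hβPi, hwβ, hleα, hq⟩
      · obtain ⟨β', hβ'R, hlt, hwβ', hq'⟩ := step β hβR hβPi hwβ hq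
        exact ih β' hβ'R (by omega) hwβ' hq'
  exact key _ β₀ hβ₀pos le_rfl hwβ₀ hleβ
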